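/- Let A and C be natural numbers with A ≤ C + 2. Then the number of triples (a,b,c) of natural numbers satisfying a ≤ b, b ≤ A, c ≤ C, and a + C + 2 ≤ b + c equals (A+1)·A·(A−1)/6 (computed in ℤ, an exact division; the count is 0 when A ≤ 1). -/
import Mathlib

open Finset

lemma aux_count_c (a b C : ℕ) (hb : b ≤ C + 2) :
    ((range (C+1)).filter (fun c => a + C + 2 ≤ b + c)).card = b - (a+1) := by
  have h : (range (C+1)).filter (fun c => a + C + 2 ≤ b + c)
      = Finset.Ico (a + C + 2 - b) (C+1) := by
    ext c; simp [Finset.mem_Ico]; omega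
  rw [h, Nat.card_Ico]; omega

lemma aux_inner (b : ℕ) : ∑ a ∈ range b, (b - (a+1)) = b.choose 2 := by
  have := Finset.sum_range_reflect (fun a => a) b
  have h2 : ∑ a ∈ range b, (b - (a+1)) = ∑ a ∈ range b, (b - 1 - a) :=
    Finset.sum_congr rfl (fun a ha => by omega)
  rw [h2, this, Finset.sum_range_id, Nat.choose_two_right]

lemma aux_choose2 (n : ℕ) : n.choose 2 * 2 = n * (n - 1) := by
  induction n with
  | zero => simp
  | succ n ih =>
    rw [Nat.choose_succ_succ' n 1, Nat.choose_one_right]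
    cases n with
    | zero => simp
    | succ m => simp only [Nat.succ_sub_one] at ih ⊢; nlinarith [ih]

lemma aux_hockey (n : ℕ) : ∑ b ∈ range n, b.choose 2 = n.choose 3 := by
  induction n with
  | zero => simp
  | succ n ih =>
    rw [Finset.sum_range_succ, ih, Nat.choose_succ_succ' n 2]
    norm_num; omega

lemma aux_six (n : ℕ) : (n+2).choose 3 * 6 = (n+2)*(n+1)*n := by
  induction n with
  | zero => simp
  | succ n ih =>
    rw [show n+1+2 = (n+2)+1 by ring, Nat.choose_succ_succ' (n+2) 2]
    have h2 := aux_choose2 (n+2)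
    simp only [Nat.succ_sub_one] at h2
    nlinarith [ih, h2]

theorem third_region_count_two_smaller_equal (A C : ℕ) (hAC : A ≤ C + 2) :
    ({(a, b, c) : ℕ × ℕ × ℕ |
        a ≤ b ∧ b ≤ A ∧ c ≤ C ∧ a + C + 2 ≤ b + c}.ncard : ℤ) =
      ((A : ℤ) + 1) * A * ((A : ℤ) - 1) / 6 := by
  set S : Finset (ℕ × ℕ × ℕ) :=
    (range (A+1) ×ˢ range (A+1) ×ˢ range (C+1)).filter
      (fun p => p.1 ≤ p.2.1 ∧ p.1 + C + 2 ≤ p.2.1 + p.2.2) with hS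
  have hset : {(a, b, c) : ℕ × ℕ × ℕ |
        a ≤ b ∧ b ≤ A ∧ c ≤ C ∧ a + C + 2 ≤ b + c} = ↑S := by
    ext ⟨a, b, c⟩
    simp [hS, Finset.mem_filter, Finset.mem_product, Nat.lt_succ_iff]
    omega
  rw [hset, Set.ncard_coe_finset]
  have hsplit : S.card = ∑ a ∈ range (A+1), ∑ b ∈ range (A+1),
      ∑ c ∈ range (C+1), (if a ≤ b ∧ a + C + 2 ≤ b + c then 1 else 0) := by
    rw [hS, Finset.card_filter, Finset.sum_product]
    exact Finset.sum_congr rfl (fun a _ => by rw [Finset.sum_product])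
  have hcard : S.card = (A+1).choose 3 := by
    rw [hsplit, Finset.sum_comm, ← aux_hockey (A+1)]
    refine Finset.sum_congr rfl (fun b hb => ?_)
    rw [← aux_inner b]
    have hsub : range b ⊆ range (A+1) := by
      apply Finset.range_subset_range.2; simp at hb; omega
    refine Eq.trans (Finset.sum_congr rfl (fun a ha => ?_))
      (Finset.sum_subset (f := fun a => b - (a+1)) hsub
        (fun a _ ha => by simp at ha ⊢; omega)).symm
    simp at ha hb
    by_cases hab : a ≤ b
    · have : ∑ c ∈ range (C+1), (if a ≤ b ∧ a + C + 2 ≤ b + c then 1 else 0)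
          = ((range (C+1)).filter (fun c => a + C + 2 ≤ b + c)).card := by
        rw [Finset.card_filter]
        exact Finset.sum_congr rfl (fun c _ => by simp [hab])
      rw [this, aux_count_c a b C (by omega)]
    · simp [hab]; omega
  rw [hcard]
  cases A with
  | zero => simp [Nat.choose]
  | succ A' =>
    have h6 := congrArg (fun n : ℕ => (n : ℤ)) (aux_six A')
    rw [show A' + 1 + 1 = A' + 2 from rfl]
    have hgoal : ((A':ℤ) + 1 + 1) * ((A':ℤ)+1) * (((A':ℤ)+1) - 1)
        = ((A'+2).choose 3 : ℤ) * 6 := by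
      push_cast at h6 ⊢; linear_combination -h6
    push_cast
    rw [hgoal, Int.mul_ediv_cancel _ (by norm_num)]
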